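/- A normal category C is subtractive if and only if the Upper 3×3 Lemma holds in C: for every commutative 3×3 diagram in C whose three columns are short exact sequences and whose middle row is a short exact sequence, if the bottom row is a short exact sequence then the top row is a short exact sequence. -/
import Mathlib


open CategoryTheory CategoryTheory.Limits

universe v u

namespace Paper

variable {𝒞 : Type u} [Category.{v} 𝒞]

/-- `f` is a regular epimorphism: it is a coequaliser of some pair of morphisms. -/
def IsRegEpi {X Y : 𝒞} (f : X ⟶ Y) : Prop :=
  ∃ (Z : 𝒞) (a b : Z ⟶ X), a ≫ f = b ≫ f ∧
    ∀ {T : 𝒞} (h : X ⟶ T), a ≫ h = b ≫ h → ∃! u : Y ⟶ T, f ≫ u = h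

/-- Regular epimorphisms are pullback-stable. -/
def RegEpisStable (𝒞 : Type u) [Category.{v} 𝒞] : Prop :=
  ∀ {P X Y Z : 𝒞} (p₁ : P ⟶ X) (p₂ : P ⟶ Y) (f : X ⟶ Z) (g : Y ⟶ Z),
    IsPullback p₁ p₂ f g → IsRegEpi g → IsRegEpi p₁

/-- Every kernel pair admits a coequaliser. -/
def KernelPairsHaveCoequalisers (𝒞 : Type u) [Category.{v} 𝒞] : Prop :=
  ∀ {R X Y : 𝒞} (f : X ⟶ Y) (a b : R ⟶ X), IsKernelPair f a b →
    ∃ (Q : 𝒞) (q : X ⟶ Q), a ≫ q = b ≫ q ∧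
      ∀ {T : 𝒞} (h : X ⟶ T), a ≫ h = b ≫ h → ∃! u : Q ⟶ T, q ≫ u = h

/-- A relation from `X` to `Y`: a jointly monomorphic span. -/
structure Rel (𝒞 : Type u) [Category.{v} 𝒞] (X Y : 𝒞) where
  R : 𝒞
  p1 : R ⟶ X
  p2 : R ⟶ Y
  jm : ∀ {Z : 𝒞} (a b : Z ⟶ R), a ≫ p1 = b ≫ p1 → a ≫ p2 = b ≫ p2 → a = b

variable {X Y Z : 𝒞}

/-- `ρ` is a subrelation of `σ`. -/
def Rel.le (ρ σ : Rel 𝒞 X Y) : Prop :=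
  ∃ j : ρ.R ⟶ σ.R, j ≫ σ.p1 = ρ.p1 ∧ j ≫ σ.p2 = ρ.p2

/-- `ρ` and `σ` are the same relation (isomorphic as subobjects of `X × Y`). -/
def Rel.equiv (ρ σ : Rel 𝒞 X Y) : Prop := ρ.le σ ∧ σ.le ρ

/-- The opposite relation. -/
def Rel.op (ρ : Rel 𝒞 X Y) : Rel 𝒞 Y X :=
  ⟨ρ.R, ρ.p2, ρ.p1, fun a b h2 h1 => ρ.jm a b h1 h2⟩

/-- A morphism viewed as a relation. -/
def homRel (f : X ⟶ Y) : Rel 𝒞 X Y :=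
  ⟨X, 𝟙 X, f, fun a b h _ => by simpa using h⟩

/-- The discrete (diagonal) relation on `X`. -/
def diagRel (X : 𝒞) : Rel 𝒞 X X := homRel (𝟙 X)

/-- The kernel pair `Eq(f)` of `f` as a relation on `X`. -/
noncomputable def kerPairRel [HasPullbacks 𝒞] (f : X ⟶ Y) : Rel 𝒞 X X :=
  ⟨pullback f f, pullback.fst f f, pullback.snd f f,
    fun a b h1 h2 => pullback.hom_ext h1 h2⟩

/-- `τ` is the composite `σρ` (first `ρ` from `X` to `Y`, then `σ` from `Y` to `Z`),
i.e. the (regular epi, jointly mono) factorisation of the span induced on the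
pullback of `ρ.p2` and `σ.p1`. -/
def IsRelComp [HasPullbacks 𝒞] (σ : Rel 𝒞 Y Z) (ρ : Rel 𝒞 X Y) (τ : Rel 𝒞 X Z) : Prop :=
  ∃ e : pullback ρ.p2 σ.p1 ⟶ τ.R, IsRegEpi e ∧
    e ≫ τ.p1 = pullback.fst ρ.p2 σ.p1 ≫ ρ.p1 ∧
    e ≫ τ.p2 = pullback.snd ρ.p2 σ.p1 ≫ σ.p2

def Rel.IsReflexive (ρ : Rel 𝒞 X X) : Prop :=
  ∃ r : X ⟶ ρ.R, r ≫ ρ.p1 = 𝟙 X ∧ r ≫ ρ.p2 = 𝟙 X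

def Rel.IsSymmetric (ρ : Rel 𝒞 X X) : Prop :=
  ∃ s : ρ.R ⟶ ρ.R, s ≫ ρ.p1 = ρ.p2 ∧ s ≫ ρ.p2 = ρ.p1

def Rel.IsTransitive [HasPullbacks 𝒞] (ρ : Rel 𝒞 X X) : Prop :=
  ∃ t : pullback ρ.p2 ρ.p1 ⟶ ρ.R,
    t ≫ ρ.p1 = pullback.fst ρ.p2 ρ.p1 ≫ ρ.p1 ∧
    t ≫ ρ.p2 = pullback.snd ρ.p2 ρ.p1 ≫ ρ.p2

def Rel.IsEquivalence [HasPullbacks 𝒞] (ρ : Rel 𝒞 X X) : Prop :=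
  ρ.IsReflexive ∧ ρ.IsSymmetric ∧ ρ.IsTransitive

/-- A finitely complete category is a Mal'tsev category when every reflexive
relation in it is an equivalence relation. -/
def IsMaltsev (𝒞 : Type u) [Category.{v} 𝒞] [HasPullbacks 𝒞] : Prop :=
  ∀ {X : 𝒞} (ρ : Rel 𝒞 X X), ρ.IsReflexive → ρ.IsEquivalence

/-- A square of type (1): split epimorphisms `f` (with section `s`) and `g`
(with section `t`), regular epimorphisms `c` and `d`, with `f·c = d·g` and
`s·d = c·t`. -/
structure IsSquare1 {A B E D : 𝒞} (f : A ⟶ B) (s : B ⟶ A) (g : E ⟶ D) (t : D ⟶ E)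
    (c : E ⟶ A) (d : D ⟶ B) : Prop where
  sec_f : s ≫ f = 𝟙 B
  sec_g : t ≫ g = 𝟙 D
  regepi_c : IsRegEpi c
  regepi_d : IsRegEpi d
  comm1 : c ≫ f = g ≫ d
  comm2 : d ≫ s = t ≫ c

/-- `N` is an ideal of morphisms. -/
def IsIdeal (N : MorphismProperty 𝒞) : Prop :=
  ∀ {X Y Z : 𝒞} (f : X ⟶ Y) (g : Y ⟶ Z), N f ∨ N g → N (f ≫ g)

/-- `n` is an `N`-kernel of `f`. -/
def IsNKernel (N : MorphismProperty 𝒞) {X Y K : 𝒞} (f : X ⟶ Y) (n : K ⟶ X) : Prop :=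
  N (n ≫ f) ∧ ∀ {Z : 𝒞} (m : Z ⟶ X), N (m ≫ f) → ∃! u : Z ⟶ K, u ≫ n = m

/-- Every morphism admits an `N`-kernel. -/
def HasNKernels (N : MorphismProperty 𝒞) : Prop :=
  ∀ {X Y : 𝒞} (f : X ⟶ Y), ∃ (K : 𝒞) (n : K ⟶ X), IsNKernel N f n

/-- `τ` is the largest star subrelation `ρ*` of the relation `ρ`. -/
def IsLargestStarSub (N : MorphismProperty 𝒞) (ρ τ : Rel 𝒞 X Y) : Prop :=
  τ.le ρ ∧ N τ.p1 ∧ ∀ σ : Rel 𝒞 X Y, σ.le ρ → N σ.p1 → σ.le τ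

/-- `(s1, s2)` is the star-kernel of `f`: the universal star coequalised by `f`. -/
def IsStarKernel (N : MorphismProperty 𝒞) {S X Y : 𝒞} (f : X ⟶ Y) (s1 s2 : S ⟶ X) : Prop :=
  N s1 ∧ s1 ≫ f = s2 ≫ f ∧
    ∀ {T : 𝒞} (t1 t2 : T ⟶ X), N t1 → t1 ≫ f = t2 ≫ f →
      ∃! u : T ⟶ S, u ≫ s1 = t1 ∧ u ≫ s2 = t2

/-- `(ν1, ν2)` is the star of the pullback relation of `(g, δ)`: the universal
pair with `ν1 ∈ N` and `δ·ν1 = g·ν2`. -/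
def IsStarPullbackRel (N : MorphismProperty 𝒞) {W E D P : 𝒞} (δ : W ⟶ D) (g : E ⟶ D)
    (ν1 : P ⟶ W) (ν2 : P ⟶ E) : Prop :=
  N ν1 ∧ ν1 ≫ δ = ν2 ≫ g ∧
    ∀ {T : 𝒞} (t1 : T ⟶ W) (t2 : T ⟶ E), N t1 → t1 ≫ δ = t2 ≫ g →
      ∃! u : T ⟶ P, u ≫ ν1 = t1 ∧ u ≫ ν2 = t2

/-- `f` is a coequaliser of `(s1, s2)`. -/
def IsCoeqOf {S X Y : 𝒞} (f : X ⟶ Y) (s1 s2 : S ⟶ X) : Prop :=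
  s1 ≫ f = s2 ≫ f ∧ ∀ {T : 𝒞} (h : X ⟶ T), s1 ≫ h = s2 ≫ h → ∃! u : Y ⟶ T, f ≫ u = h

/-- Star-regularity: every regular epimorphism is a coequaliser of a star. -/
def StarRegular (𝒞 : Type u) [Category.{v} 𝒞] (N : MorphismProperty 𝒞) : Prop :=
  ∀ {X Y : 𝒞} (f : X ⟶ Y), IsRegEpi f →
    ∃ (S : 𝒞) (s1 s2 : S ⟶ X), N s1 ∧ IsCoeqOf f s1 s2

/-- `f` is saturating: the induced morphism between the `N`-kernels of the
identities is a regular epimorphism. -/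
def Saturating (N : MorphismProperty 𝒞) {X Y : 𝒞} (f : X ⟶ Y) : Prop :=
  ∀ {KX KY : 𝒞} (nX : KX ⟶ X) (nY : KY ⟶ Y), IsNKernel N (𝟙 X) nX → IsNKernel N (𝟙 Y) nY →
    ∀ u : KX ⟶ KY, u ≫ nY = nX ≫ f → IsRegEpi u

/-- `X` is an `N`-trivial object. -/
def NTrivial (N : MorphismProperty 𝒞) (X : 𝒞) : Prop := N (𝟙 X)

/-- The multi-pointed category has enough trivial objects: `N` is a closed ideal and
`N`-trivial objects are closed under subobjects and squares. -/
def EnoughTrivialObjects [HasBinaryProducts 𝒞] (N : MorphismProperty 𝒞) : Prop :=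
  (∀ {X Y : 𝒞} (f : X ⟶ Y), N f → ∃ (T : 𝒞) (p : X ⟶ T) (q : T ⟶ Y),
      NTrivial N T ∧ p ≫ q = f) ∧
  (∀ {S X : 𝒞} (m : S ⟶ X), Mono m → NTrivial N X → NTrivial N S) ∧
  (∀ X : 𝒞, NTrivial N X → NTrivial N (X ⨯ X))

/-- A square of type (1) is a star-regular pushout when `(c g°)* = f° d*`. -/
def IsStarRegularPushout [HasPullbacks 𝒞] (N : MorphismProperty 𝒞) {A B E D : 𝒞}
    (f : A ⟶ B) (g : E ⟶ D) (c : E ⟶ A) (d : D ⟶ B) : Prop :=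
  ∀ (ρ τ μ : Rel 𝒞 D A) (ds : Rel 𝒞 D B),
    IsRelComp (homRel c) (Rel.op (homRel g)) ρ → IsLargestStarSub N ρ τ →
    IsLargestStarSub N (homRel d) ds → IsRelComp (Rel.op (homRel f)) ds μ →
    τ.equiv μ

/-- 2-star-permutability: `Eq(f) Eq(g)* = Eq(g) Eq(f)*` for all regular
epimorphisms `f`, `g` with the same domain. -/
def TwoStarPermutable (𝒞 : Type u) [Category.{v} 𝒞] [HasPullbacks 𝒞]
    (N : MorphismProperty 𝒞) : Prop :=
  ∀ {X Y Z : 𝒞} (f : X ⟶ Y) (g : X ⟶ Z), IsRegEpi f → IsRegEpi g →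
    ∀ (sf sg : Rel 𝒞 X X), IsLargestStarSub N (kerPairRel f) sf →
      IsLargestStarSub N (kerPairRel g) sg →
    ∀ (τ₁ τ₂ : Rel 𝒞 X X), IsRelComp (kerPairRel f) sg τ₁ →
      IsRelComp (kerPairRel g) sf τ₂ → τ₁.equiv τ₂

section Pointed

variable [HasZeroMorphisms 𝒞]

/-- `k` is a kernel of `f`. -/
def IsKernelOf {K X Y : 𝒞} (k : K ⟶ X) (f : X ⟶ Y) : Prop :=
  k ≫ f = 0 ∧ ∀ {Z : 𝒞} (m : Z ⟶ X), m ≫ f = 0 → ∃! u : Z ⟶ K, u ≫ k = m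

/-- `f` is a cokernel of `k`. -/
def IsCokernelOf {X Y K : 𝒞} (f : X ⟶ Y) (k : K ⟶ X) : Prop :=
  k ≫ f = 0 ∧ ∀ {T : 𝒞} (h : X ⟶ T), k ≫ h = 0 → ∃! u : Y ⟶ T, f ≫ u = h

/-- Short exact sequence `K → X ↠ Y`. -/
def IsShortExact {K X Y : 𝒞} (k : K ⟶ X) (f : X ⟶ Y) : Prop :=
  IsKernelOf k f ∧ IsCokernelOf f k

/-- Subtractivity: every reflexive, left punctual relation is right punctual. -/
def IsSubtractive (𝒞 : Type u) [Category.{v} 𝒞] [HasZeroMorphisms 𝒞] : Prop :=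
  ∀ {X : 𝒞} (ρ : Rel 𝒞 X X), ρ.IsReflexive →
    (∃ l : X ⟶ ρ.R, l ≫ ρ.p1 = 𝟙 X ∧ l ≫ ρ.p2 = 0) →
    (∃ r : X ⟶ ρ.R, r ≫ ρ.p1 = 0 ∧ r ≫ ρ.p2 = 𝟙 X)

end Pointed

section Aux

lemma IsRegEpi.cancel {X Y : 𝒞} {f : X ⟶ Y} (h : IsRegEpi f) {T : 𝒞} {u v : Y ⟶ T}
    (huv : f ≫ u = f ≫ v) : u = v := by
  obtain ⟨Z, a, b, hab, huniv⟩ := h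
  obtain ⟨w, -, hw⟩ := huniv (f ≫ u)
    (by rw [← Category.assoc, ← Category.assoc, hab])
  exact (hw u rfl).trans (hw v huv.symm).symm

lemma isRegEpi_of_section {X Y : 𝒞} {f : X ⟶ Y} (s : Y ⟶ X) (hs : s ≫ f = 𝟙 Y) :
    IsRegEpi f := by
  refine ⟨X, f ≫ s, 𝟙 X, by rw [Category.assoc, hs, Category.comp_id, Category.id_comp],
    fun {T} h hh => ?_⟩
  rw [Category.id_comp] at hh
  refine ⟨s ≫ h, ?_, fun y hy => ?_⟩
  · show f ≫ s ≫ h = h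
    rw [← Category.assoc]
    exact hh
  · calc y = (s ≫ f) ≫ y := by rw [hs, Category.id_comp]
      _ = s ≫ h := by rw [Category.assoc, hy]

lemma IsRegEpi.coeq_kernel_pair [HasPullbacks 𝒞] {X Y : 𝒞} {f : X ⟶ Y} (h : IsRegEpi f)
    {T : 𝒞} (k : X ⟶ T) (hk : pullback.fst f f ≫ k = pullback.snd f f ≫ k) :
    ∃! u : Y ⟶ T, f ≫ u = k := by
  obtain ⟨Z, a, b, hab, huniv⟩ := h
  refine huniv k ?_
  have hz : a ≫ f = b ≫ f := hab
  calc a ≫ k = pullback.lift a b hz ≫ pullback.fst f f ≫ k := by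
        rw [← Category.assoc, pullback.lift_fst]
    _ = pullback.lift a b hz ≫ pullback.snd f f ≫ k := by rw [hk]
    _ = b ≫ k := by rw [← Category.assoc, pullback.lift_snd]

/-- If `h` coequalises the kernel pair of `w`, then any two maps with equal
composites with `w` also have equal composites with `h`. -/
lemma comp_eq_of_kp [HasPullbacks 𝒞] {V X Y T : 𝒞} {w : X ⟶ Y} {x y : V ⟶ X}
    (hxy : x ≫ w = y ≫ w) {h : X ⟶ T}
    (hh : pullback.fst w w ≫ h = pullback.snd w w ≫ h) : x ≫ h = y ≫ h := by
  calc x ≫ h = pullback.lift x y hxy ≫ pullback.fst w w ≫ h := by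
        rw [← Category.assoc, pullback.lift_fst]
    _ = pullback.lift x y hxy ≫ pullback.snd w w ≫ h := by rw [hh]
    _ = y ≫ h := by rw [← Category.assoc, pullback.lift_snd]

lemma isRegEpi_comp [HasPullbacks 𝒞] (hstab : RegEpisStable 𝒞) {X Y Z : 𝒞}
    {f : X ⟶ Y} {g : Y ⟶ Z} (hf : IsRegEpi f) (hg : IsRegEpi g) : IsRegEpi (f ≫ g) := by
  refine ⟨pullback (f ≫ g) (f ≫ g), pullback.fst _ _, pullback.snd _ _,
    pullback.condition, fun {T} h hh => ?_⟩
  have hkp : pullback.fst f f ≫ h = pullback.snd f f ≫ h := by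
    refine comp_eq_of_kp ?_ hh
    rw [← Category.assoc, pullback.condition, Category.assoc]
  obtain ⟨h', hh', -⟩ := hf.coeq_kernel_pair h hkp
  set c := pullback.fst g g with hc
  set d := pullback.snd g g with hd
  have hw2 : IsRegEpi (pullback.fst c f) :=
    hstab _ _ _ _ (IsPullback.of_hasPullback c f) hf
  have hv : IsRegEpi (pullback.fst (pullback.fst c f ≫ d) f) :=
    hstab _ _ _ _ (IsPullback.of_hasPullback (pullback.fst c f ≫ d) f) hf
  set vf := pullback.fst (pullback.fst c f ≫ d) f with hvf
  set vs := pullback.snd (pullback.fst c f ≫ d) f with hvs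
  have hWcond : pullback.fst c f ≫ c = pullback.snd c f ≫ f := pullback.condition
  have hVcond : vf ≫ pullback.fst c f ≫ d = vs ≫ f := pullback.condition
  have hcd : c ≫ g = d ≫ g := pullback.condition
  have hαβ : (vf ≫ pullback.snd c f) ≫ f ≫ g = vs ≫ f ≫ g := by
    calc (vf ≫ pullback.snd c f) ≫ f ≫ g
        = vf ≫ (pullback.snd c f ≫ f) ≫ g := by simp only [Category.assoc]
      _ = vf ≫ (pullback.fst c f ≫ c) ≫ g := by rw [hWcond]
      _ = vf ≫ pullback.fst c f ≫ c ≫ g := by simp only [Category.assoc]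
      _ = vf ≫ pullback.fst c f ≫ d ≫ g := by rw [hcd]
      _ = (vf ≫ pullback.fst c f ≫ d) ≫ g := by simp only [Category.assoc]
      _ = (vs ≫ f) ≫ g := by rw [hVcond]
      _ = vs ≫ f ≫ g := by simp only [Category.assoc]
  have hαβh : (vf ≫ pullback.snd c f) ≫ h = vs ≫ h := comp_eq_of_kp hαβ hh
  have hch' : c ≫ h' = d ≫ h' := by
    apply hw2.cancel
    apply hv.cancel
    calc vf ≫ pullback.fst c f ≫ c ≫ h'
        = vf ≫ (pullback.fst c f ≫ c) ≫ h' := by simp only [Category.assoc]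
      _ = vf ≫ (pullback.snd c f ≫ f) ≫ h' := by rw [hWcond]
      _ = (vf ≫ pullback.snd c f) ≫ (f ≫ h') := by simp only [Category.assoc]
      _ = (vf ≫ pullback.snd c f) ≫ h := by rw [hh']
      _ = vs ≫ h := hαβh
      _ = vs ≫ f ≫ h' := by rw [hh']
      _ = (vs ≫ f) ≫ h' := by simp only [Category.assoc]
      _ = (vf ≫ pullback.fst c f ≫ d) ≫ h' := by rw [hVcond]
      _ = vf ≫ pullback.fst c f ≫ d ≫ h' := by simp only [Category.assoc]
  obtain ⟨u, hu, -⟩ := hg.coeq_kernel_pair h' hch'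
  refine ⟨u, ?_, fun y hy => ?_⟩
  · show (f ≫ g) ≫ u = h
    rw [Category.assoc, hu, hh']
  · have hy' : (f ≫ g) ≫ y = h := hy
    apply hg.cancel
    apply hf.cancel
    rw [hu, hh', ← hy']
    simp only [Category.assoc]

lemma exists_image [HasPullbacks 𝒞] (hcoeq : KernelPairsHaveCoequalisers 𝒞)
    (hstab : RegEpisStable 𝒞) {X Y : 𝒞} (f : X ⟶ Y) :
    ∃ (I : 𝒞) (g : X ⟶ I) (m : I ⟶ Y), IsRegEpi g ∧ g ≫ m = f ∧
      ∀ {T : 𝒞} (u v : T ⟶ I), u ≫ m = v ≫ m → u = v := by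
  obtain ⟨Q, q, hq1, hq2⟩ := hcoeq f (pullback.fst f f) (pullback.snd f f)
    (IsPullback.of_hasPullback f f)
  have hqreg : IsRegEpi q := ⟨pullback f f, pullback.fst f f, pullback.snd f f, hq1, hq2⟩
  obtain ⟨m, hm, -⟩ := hq2 f pullback.condition
  -- show the kernel pair of m is trivial
  set e₁ := pullback.fst m m with he₁
  set e₂ := pullback.snd m m with he₂
  have hdE : IsRegEpi (pullback.fst e₁ q) :=
    hstab _ _ _ _ (IsPullback.of_hasPullback e₁ q) hqreg
  set dE := pullback.fst e₁ q with hdE'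
  set dX := pullback.snd e₁ q with hdX'
  have hd'd : IsRegEpi (pullback.fst (dE ≫ e₂) q) :=
    hstab _ _ _ _ (IsPullback.of_hasPullback (dE ≫ e₂) q) hqreg
  set d'D := pullback.fst (dE ≫ e₂) q with hd'D'
  set d'X := pullback.snd (dE ≫ e₂) q with hd'X'
  have hDcond : dE ≫ e₁ = dX ≫ q := pullback.condition
  have hD'cond : d'D ≫ dE ≫ e₂ = d'X ≫ q := pullback.condition
  have hEcond : e₁ ≫ m = e₂ ≫ m := pullback.condition
  have hαβ : (d'D ≫ dX) ≫ f = d'X ≫ f := by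
    calc (d'D ≫ dX) ≫ f = d'D ≫ dX ≫ q ≫ m := by rw [← hm]; simp only [Category.assoc]
      _ = d'D ≫ (dX ≫ q) ≫ m := by simp only [Category.assoc]
      _ = d'D ≫ (dE ≫ e₁) ≫ m := by rw [hDcond]
      _ = d'D ≫ dE ≫ (e₁ ≫ m) := by simp only [Category.assoc]
      _ = d'D ≫ dE ≫ (e₂ ≫ m) := by rw [hEcond]
      _ = (d'D ≫ dE ≫ e₂) ≫ m := by simp only [Category.assoc]
      _ = (d'X ≫ q) ≫ m := by rw [hD'cond]
      _ = d'X ≫ f := by rw [Category.assoc, hm]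
  have hαβq : (d'D ≫ dX) ≫ q = d'X ≫ q := by
    calc (d'D ≫ dX) ≫ q
        = pullback.lift _ _ hαβ ≫ pullback.fst f f ≫ q := by
          rw [← Category.assoc, pullback.lift_fst]
      _ = pullback.lift _ _ hαβ ≫ pullback.snd f f ≫ q := by rw [hq1]
      _ = d'X ≫ q := by rw [← Category.assoc, pullback.lift_snd]
  have he : e₁ = e₂ := by
    apply hdE.cancel
    apply hd'd.cancel
    calc d'D ≫ dE ≫ e₁ = d'D ≫ dX ≫ q := by rw [hDcond]
      _ = (d'D ≫ dX) ≫ q := by simp only [Category.assoc]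
      _ = d'X ≫ q := hαβq
      _ = d'D ≫ dE ≫ e₂ := hD'cond.symm
  refine ⟨Q, q, m, hqreg, hm, fun {T} u v huv => ?_⟩
  have hw1 := pullback.lift_fst u v huv
  have hw2 := pullback.lift_snd u v huv
  calc u = pullback.lift u v huv ≫ e₁ := hw1.symm
    _ = pullback.lift u v huv ≫ e₂ := by rw [he]
    _ = v := hw2

lemma isRegEpi_of_comp [HasPullbacks 𝒞] (hcoeq : KernelPairsHaveCoequalisers 𝒞)
    (hstab : RegEpisStable 𝒞) {W X Y : 𝒞} {w : W ⟶ X} {f : X ⟶ Y}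
    (h : IsRegEpi (w ≫ f)) : IsRegEpi f := by
  obtain ⟨I, g, m, hgreg, hgm, hmono⟩ := exists_image hcoeq hstab f
  -- m is a split mono which is also split epi, hence iso
  obtain ⟨Z, a, b, hab, huniv⟩ := id h
  have hab' : a ≫ (w ≫ g) = b ≫ (w ≫ g) := by
    apply hmono
    simp only [Category.assoc, hgm]
    exact hab
  obtain ⟨u, hu, -⟩ := huniv (w ≫ g) hab'
  have hum : u ≫ m = 𝟙 Y := by
    apply h.cancel
    rw [← Category.assoc, hu, Category.assoc, hgm, Category.comp_id]
  have hmu : m ≫ u = 𝟙 I := by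
    apply hmono
    rw [Category.assoc, hum, Category.comp_id, Category.id_comp]
  -- f = g ≫ m with m iso, g regular epi
  obtain ⟨Z', a', b', hab2, huniv2⟩ := id hgreg
  refine ⟨Z', a', b', ?_, fun {T} k hk => ?_⟩
  · rw [← hgm, ← Category.assoc, ← Category.assoc, hab2]
  · obtain ⟨v, hv, -⟩ := huniv2 k hk
    refine ⟨u ≫ v, ?_, fun y hy => ?_⟩
    · show f ≫ u ≫ v = k
      rw [← hgm]
      calc (g ≫ m) ≫ u ≫ v = g ≫ (m ≫ u) ≫ v := by simp only [Category.assoc]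
        _ = g ≫ v := by rw [hmu, Category.id_comp]
        _ = k := hv
    · have hmy : g ≫ m ≫ y = k := by rw [← Category.assoc, hgm, hy]
      have : m ≫ y = v := by
        apply hgreg.cancel
        rw [hmy, hv]
      calc y = (u ≫ m) ≫ y := by rw [hum, Category.id_comp]
        _ = u ≫ m ≫ y := by simp only [Category.assoc]
        _ = u ≫ v := by rw [this]

end Aux

section AuxPointed

variable [HasZeroMorphisms 𝒞]

lemma IsKernelOf.cancel {K X Y : 𝒞} {k : K ⟶ X} {f : X ⟶ Y}
    (h : IsKernelOf k f) {T : 𝒞} {u v : T ⟶ K} (huv : u ≫ k = v ≫ k) : u = v := by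
  obtain ⟨w, -, hw⟩ := h.2 (u ≫ k) (by rw [Category.assoc, h.1, comp_zero])
  exact (hw u rfl).trans (hw v huv.symm).symm

lemma IsCokernelOf.isRegEpi {X Y K : 𝒞} {f : X ⟶ Y} {k : K ⟶ X}
    (h : IsCokernelOf f k) : IsRegEpi f :=
  ⟨K, k, 0, by rw [h.1, zero_comp], fun {T} h' hh' => h.2 h' (by rw [hh', zero_comp])⟩

/-- In the presence of normality, a regular epi is the cokernel of any kernel of it. -/
lemma cokernelOf_kernel
    (hnormal : ∀ {X Y : 𝒞} (f : X ⟶ Y), IsRegEpi f →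
      ∃ (K : 𝒞) (k : K ⟶ X), IsCokernelOf f k)
    {K X Y : 𝒞} {f : X ⟶ Y} {k : K ⟶ X} (hreg : IsRegEpi f) (hker : IsKernelOf k f) :
    IsCokernelOf f k := by
  obtain ⟨K', k', hk'⟩ := hnormal f hreg
  refine ⟨hker.1, fun {T} h hh => ?_⟩
  obtain ⟨v, hv, -⟩ := hker.2 k' hk'.1
  obtain ⟨u, hu, -⟩ := hk'.2 h (by rw [← hv, Category.assoc, hh, comp_zero])
  exact ⟨u, hu, fun y hy => hreg.cancel (hy.trans hu.symm)⟩

lemma isKernelOf_kernel_ι [HasKernels 𝒞] {X Y : 𝒞} (f : X ⟶ Y) :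
    IsKernelOf (kernel.ι f) f := by
  refine ⟨kernel.condition f, fun {Z} m hm =>
    ⟨kernel.lift f m hm, kernel.lift_ι f m hm, fun y hy => ?_⟩⟩
  exact (cancel_mono (kernel.ι f)).1 (by rw [hy, kernel.lift_ι])

lemma shortExact_of_section [HasKernels 𝒞]
    (hnormal : ∀ {X Y : 𝒞} (f : X ⟶ Y), IsRegEpi f →
      ∃ (K : 𝒞) (k : K ⟶ X), IsCokernelOf f k)
    {X Y : 𝒞} {f : X ⟶ Y} (s : Y ⟶ X) (hs : s ≫ f = 𝟙 Y) :
    IsShortExact (kernel.ι f) f :=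
  ⟨isKernelOf_kernel_ι f,
    cokernelOf_kernel hnormal (isRegEpi_of_section s hs) (isKernelOf_kernel_ι f)⟩

lemma shortExact_id_zero {X Z : 𝒞} (hZ : IsZero Z) :
    IsShortExact (𝟙 X) (0 : X ⟶ Z) := by
  constructor
  · refine ⟨by rw [Category.id_comp], fun {W} m _ => ⟨m, ?_, fun y hy => ?_⟩⟩
    · show m ≫ 𝟙 X = m
      rw [Category.comp_id]
    · have hy' : y ≫ 𝟙 X = m := hy
      rw [← hy', Category.comp_id]
  · refine ⟨by rw [comp_zero], fun {T} h hh => ?_⟩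
    rw [Category.id_comp] at hh
    refine ⟨0, ?_, fun y _ => hZ.eq_of_src y 0⟩
    show (0 : X ⟶ Z) ≫ 0 = h
    rw [comp_zero, hh]

/-- The key consequence of subtractivity: relations are closed under "subtraction"
of elements with a common first component. -/
lemma sub_rule [HasPullbacks 𝒞] (hsub : IsSubtractive 𝒞)
    {X Y T : 𝒞} (ρ : Rel 𝒞 X Y) (t₁ t₂ : T ⟶ ρ.R)
    (h1 : t₁ ≫ ρ.p1 = t₂ ≫ ρ.p1) (h2 : t₂ ≫ ρ.p2 = 0) :
    ∃ t₃ : T ⟶ ρ.R, t₃ ≫ ρ.p1 = 0 ∧ t₃ ≫ ρ.p2 = t₁ ≫ ρ.p2 := by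
  have hQ₁cond : pullback.fst ρ.p1 (t₁ ≫ ρ.p1) ≫ ρ.p1 = pullback.snd ρ.p1 (t₁ ≫ ρ.p1) ≫ (t₁ ≫ ρ.p1) := pullback.condition
  have hQcond : pullback.fst (pullback.fst ρ.p1 (t₁ ≫ ρ.p1) ≫ ρ.p2) (t₁ ≫ ρ.p2) ≫ pullback.fst ρ.p1 (t₁ ≫ ρ.p1) ≫ ρ.p2 = pullback.snd (pullback.fst ρ.p1 (t₁ ≫ ρ.p1) ≫ ρ.p2) (t₁ ≫ ρ.p2) ≫ (t₁ ≫ ρ.p2) := pullback.condition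
  have jm : ∀ {Z : 𝒞} (a b : Z ⟶ pullback (pullback.fst ρ.p1 (t₁ ≫ ρ.p1) ≫ ρ.p2) (t₁ ≫ ρ.p2)),
      a ≫ pullback.fst (pullback.fst ρ.p1 (t₁ ≫ ρ.p1) ≫ ρ.p2) (t₁ ≫ ρ.p2) ≫ pullback.snd ρ.p1 (t₁ ≫ ρ.p1) = b ≫ pullback.fst (pullback.fst ρ.p1 (t₁ ≫ ρ.p1) ≫ ρ.p2) (t₁ ≫ ρ.p2) ≫ pullback.snd ρ.p1 (t₁ ≫ ρ.p1) → a ≫ pullback.snd (pullback.fst ρ.p1 (t₁ ≫ ρ.p1) ≫ ρ.p2) (t₁ ≫ ρ.p2) = b ≫ pullback.snd (pullback.fst ρ.p1 (t₁ ≫ ρ.p1) ≫ ρ.p2) (t₁ ≫ ρ.p2) → a = b := by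
    intro Z a b hA hB
    apply pullback.hom_ext _ hB
    apply pullback.hom_ext
    · apply ρ.jm
      · simp only [Category.assoc]
        rw [hQ₁cond]
        calc a ≫ pullback.fst (pullback.fst ρ.p1 (t₁ ≫ ρ.p1) ≫ ρ.p2) (t₁ ≫ ρ.p2) ≫ pullback.snd ρ.p1 (t₁ ≫ ρ.p1) ≫ t₁ ≫ ρ.p1
            = (a ≫ pullback.fst (pullback.fst ρ.p1 (t₁ ≫ ρ.p1) ≫ ρ.p2) (t₁ ≫ ρ.p2) ≫ pullback.snd ρ.p1 (t₁ ≫ ρ.p1)) ≫ t₁ ≫ ρ.p1 := by simp only [Category.assoc]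
          _ = (b ≫ pullback.fst (pullback.fst ρ.p1 (t₁ ≫ ρ.p1) ≫ ρ.p2) (t₁ ≫ ρ.p2) ≫ pullback.snd ρ.p1 (t₁ ≫ ρ.p1)) ≫ t₁ ≫ ρ.p1 := by rw [hA]
          _ = b ≫ pullback.fst (pullback.fst ρ.p1 (t₁ ≫ ρ.p1) ≫ ρ.p2) (t₁ ≫ ρ.p2) ≫ pullback.snd ρ.p1 (t₁ ≫ ρ.p1) ≫ t₁ ≫ ρ.p1 := by simp only [Category.assoc]
      · simp only [Category.assoc]
        rw [hQcond]
        calc a ≫ pullback.snd (pullback.fst ρ.p1 (t₁ ≫ ρ.p1) ≫ ρ.p2) (t₁ ≫ ρ.p2) ≫ t₁ ≫ ρ.p2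
            = (a ≫ pullback.snd (pullback.fst ρ.p1 (t₁ ≫ ρ.p1) ≫ ρ.p2) (t₁ ≫ ρ.p2)) ≫ t₁ ≫ ρ.p2 := by simp only [Category.assoc]
          _ = (b ≫ pullback.snd (pullback.fst ρ.p1 (t₁ ≫ ρ.p1) ≫ ρ.p2) (t₁ ≫ ρ.p2)) ≫ t₁ ≫ ρ.p2 := by rw [hB]
          _ = b ≫ pullback.snd (pullback.fst ρ.p1 (t₁ ≫ ρ.p1) ≫ ρ.p2) (t₁ ≫ ρ.p2) ≫ t₁ ≫ ρ.p2 := by simp only [Category.assoc]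
    · simp only [Category.assoc]
      exact hA
  have hr1lift : t₁ ≫ ρ.p1 = 𝟙 T ≫ (t₁ ≫ ρ.p1) := (Category.id_comp _).symm
  have hreflift : pullback.lift t₁ (𝟙 T) hr1lift ≫ pullback.fst ρ.p1 (t₁ ≫ ρ.p1) ≫ ρ.p2
      = 𝟙 T ≫ (t₁ ≫ ρ.p2) := by
    rw [← Category.assoc, pullback.lift_fst, Category.id_comp]
  have hl1lift : t₂ ≫ ρ.p1 = 𝟙 T ≫ (t₁ ≫ ρ.p1) := by
    rw [Category.id_comp]
    exact h1.symm
  have hlplift : pullback.lift t₂ (𝟙 T) hl1lift ≫ pullback.fst ρ.p1 (t₁ ≫ ρ.p1) ≫ ρ.p2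
      = (0 : T ⟶ T) ≫ (t₁ ≫ ρ.p2) := by
    rw [← Category.assoc, pullback.lift_fst, h2, zero_comp]
  have hrefl : ∃ rr : T ⟶ pullback (pullback.fst ρ.p1 (t₁ ≫ ρ.p1) ≫ ρ.p2) (t₁ ≫ ρ.p2), rr ≫ (pullback.fst (pullback.fst ρ.p1 (t₁ ≫ ρ.p1) ≫ ρ.p2) (t₁ ≫ ρ.p2) ≫ pullback.snd ρ.p1 (t₁ ≫ ρ.p1)) = 𝟙 T ∧ rr ≫ pullback.snd (pullback.fst ρ.p1 (t₁ ≫ ρ.p1) ≫ ρ.p2) (t₁ ≫ ρ.p2) = 𝟙 T := by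
    refine ⟨pullback.lift (pullback.lift t₁ (𝟙 T) hr1lift) (𝟙 T) hreflift, ?_, ?_⟩
    · rw [← Category.assoc, pullback.lift_fst, pullback.lift_snd]
    · rw [pullback.lift_snd]
  have hlpct : ∃ ll : T ⟶ pullback (pullback.fst ρ.p1 (t₁ ≫ ρ.p1) ≫ ρ.p2) (t₁ ≫ ρ.p2), ll ≫ (pullback.fst (pullback.fst ρ.p1 (t₁ ≫ ρ.p1) ≫ ρ.p2) (t₁ ≫ ρ.p2) ≫ pullback.snd ρ.p1 (t₁ ≫ ρ.p1)) = 𝟙 T ∧ ll ≫ pullback.snd (pullback.fst ρ.p1 (t₁ ≫ ρ.p1) ≫ ρ.p2) (t₁ ≫ ρ.p2) = 0 := by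
    refine ⟨pullback.lift (pullback.lift t₂ (𝟙 T) hl1lift) 0 hlplift, ?_, ?_⟩
    · rw [← Category.assoc, pullback.lift_fst, pullback.lift_snd]
    · rw [pullback.lift_snd]
  obtain ⟨rp, hrp1, hrp2⟩ := hsub ⟨pullback (pullback.fst ρ.p1 (t₁ ≫ ρ.p1) ≫ ρ.p2) (t₁ ≫ ρ.p2), pullback.fst (pullback.fst ρ.p1 (t₁ ≫ ρ.p1) ≫ ρ.p2) (t₁ ≫ ρ.p2) ≫ pullback.snd ρ.p1 (t₁ ≫ ρ.p1), pullback.snd (pullback.fst ρ.p1 (t₁ ≫ ρ.p1) ≫ ρ.p2) (t₁ ≫ ρ.p2), jm⟩ hrefl hlpct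
  refine ⟨rp ≫ pullback.fst (pullback.fst ρ.p1 (t₁ ≫ ρ.p1) ≫ ρ.p2) (t₁ ≫ ρ.p2) ≫ pullback.fst ρ.p1 (t₁ ≫ ρ.p1), ?_, ?_⟩
  · have hrp1' : rp ≫ (pullback.fst (pullback.fst ρ.p1 (t₁ ≫ ρ.p1) ≫ ρ.p2) (t₁ ≫ ρ.p2) ≫ pullback.snd ρ.p1 (t₁ ≫ ρ.p1)) = 0 := hrp1
    calc (rp ≫ pullback.fst (pullback.fst ρ.p1 (t₁ ≫ ρ.p1) ≫ ρ.p2) (t₁ ≫ ρ.p2) ≫ pullback.fst ρ.p1 (t₁ ≫ ρ.p1)) ≫ ρ.p1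
        = rp ≫ pullback.fst (pullback.fst ρ.p1 (t₁ ≫ ρ.p1) ≫ ρ.p2) (t₁ ≫ ρ.p2) ≫ pullback.fst ρ.p1 (t₁ ≫ ρ.p1) ≫ ρ.p1 := by simp only [Category.assoc]
      _ = rp ≫ pullback.fst (pullback.fst ρ.p1 (t₁ ≫ ρ.p1) ≫ ρ.p2) (t₁ ≫ ρ.p2) ≫ pullback.snd ρ.p1 (t₁ ≫ ρ.p1) ≫ t₁ ≫ ρ.p1 := by rw [hQ₁cond]
      _ = (rp ≫ (pullback.fst (pullback.fst ρ.p1 (t₁ ≫ ρ.p1) ≫ ρ.p2) (t₁ ≫ ρ.p2) ≫ pullback.snd ρ.p1 (t₁ ≫ ρ.p1))) ≫ t₁ ≫ ρ.p1 := by simp only [Category.assoc]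
      _ = 0 := by rw [hrp1', zero_comp]
  · have hrp2' : rp ≫ pullback.snd (pullback.fst ρ.p1 (t₁ ≫ ρ.p1) ≫ ρ.p2) (t₁ ≫ ρ.p2) = 𝟙 T := hrp2
    calc (rp ≫ pullback.fst (pullback.fst ρ.p1 (t₁ ≫ ρ.p1) ≫ ρ.p2) (t₁ ≫ ρ.p2) ≫ pullback.fst ρ.p1 (t₁ ≫ ρ.p1)) ≫ ρ.p2
        = rp ≫ pullback.fst (pullback.fst ρ.p1 (t₁ ≫ ρ.p1) ≫ ρ.p2) (t₁ ≫ ρ.p2) ≫ pullback.fst ρ.p1 (t₁ ≫ ρ.p1) ≫ ρ.p2 := by simp only [Category.assoc]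
      _ = rp ≫ pullback.snd (pullback.fst ρ.p1 (t₁ ≫ ρ.p1) ≫ ρ.p2) (t₁ ≫ ρ.p2) ≫ t₁ ≫ ρ.p2 := by rw [hQcond]
      _ = (rp ≫ pullback.snd (pullback.fst ρ.p1 (t₁ ≫ ρ.p1) ≫ ρ.p2) (t₁ ≫ ρ.p2)) ≫ t₁ ≫ ρ.p2 := by simp only [Category.assoc]
      _ = t₁ ≫ ρ.p2 := by rw [hrp2', Category.id_comp]

end AuxPointed

/-- A normal category (a pointed regular category in which
every regular epimorphism is a normal epimorphism) is subtractive iff the Upper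
3×3 Lemma holds in it. -/
theorem statement14 [HasZeroObject 𝒞] [HasZeroMorphisms 𝒞] [HasFiniteLimits 𝒞]
    (hcoeq : KernelPairsHaveCoequalisers 𝒞) (hstab : RegEpisStable 𝒞)
    (hnormal : ∀ {X Y : 𝒞} (f : X ⟶ Y), IsRegEpi f →
      ∃ (K : 𝒞) (k : K ⟶ X), IsCokernelOf f k) :
    IsSubtractive 𝒞 ↔
      ∀ {A₁ A₂ A₃ B₁ B₂ B₃ C₁ C₂ C₃ : 𝒞}
        (a₁ : A₁ ⟶ B₁) (a₂ : A₂ ⟶ B₂) (a₃ : A₃ ⟶ B₃)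
        (b₁ : B₁ ⟶ C₁) (b₂ : B₂ ⟶ C₂) (b₃ : B₃ ⟶ C₃)
        (p₁ : A₁ ⟶ A₂) (p₂ : A₂ ⟶ A₃)
        (q₁ : B₁ ⟶ B₂) (q₂ : B₂ ⟶ B₃)
        (r₁ : C₁ ⟶ C₂) (r₂ : C₂ ⟶ C₃),
        -- the four squares commute
        p₁ ≫ a₂ = a₁ ≫ q₁ → p₂ ≫ a₃ = a₂ ≫ q₂ →
        q₁ ≫ b₂ = b₁ ≫ r₁ → q₂ ≫ b₃ = b₂ ≫ r₂ →
        -- the three columns are short exact sequences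
        IsShortExact a₁ b₁ → IsShortExact a₂ b₂ → IsShortExact a₃ b₃ →
        -- the middle row is a short exact sequence
        IsShortExact q₁ q₂ →
        -- if the bottom row is short exact then so is the top row
        IsShortExact r₁ r₂ → IsShortExact p₁ p₂ := by
  constructor
  · -- subtractive implies the Upper 3×3 Lemma
    intro hsub A₁ A₂ A₃ B₁ B₂ B₃ C₁ C₂ C₃ a₁ a₂ a₃ b₁ b₂ b₃ p₁ p₂ q₁ q₂ r₁ r₂
    intro hsq1 hsq2 hsq3 hsq4 hc1 hc2 hc3 hmid hbot
    obtain ⟨hk1, hco1⟩ := hc1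
    obtain ⟨hk2, hco2⟩ := hc2
    obtain ⟨hk3, hco3⟩ := hc3
    obtain ⟨hmk, hmc⟩ := hmid
    obtain ⟨hbk, hbc⟩ := hbot
    have hp12 : p₁ ≫ p₂ = 0 := by
      apply hk3.cancel
      calc (p₁ ≫ p₂) ≫ a₃ = p₁ ≫ (p₂ ≫ a₃) := by simp only [Category.assoc]
        _ = p₁ ≫ (a₂ ≫ q₂) := by rw [hsq2]
        _ = (p₁ ≫ a₂) ≫ q₂ := by simp only [Category.assoc]
        _ = (a₁ ≫ q₁) ≫ q₂ := by rw [hsq1]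
        _ = a₁ ≫ (q₁ ≫ q₂) := by simp only [Category.assoc]
        _ = 0 := by rw [hmk.1, comp_zero]
        _ = 0 ≫ a₃ := by rw [zero_comp]
    have hker : ∀ {Z : 𝒞} (m : Z ⟶ A₂), m ≫ p₂ = 0 → ∃! u : Z ⟶ A₁, u ≫ p₁ = m := by
      intro Z m hm0
      have h1 : (m ≫ a₂) ≫ q₂ = 0 := by
        rw [Category.assoc, ← hsq2, ← Category.assoc, hm0, zero_comp]
      obtain ⟨w, hw, -⟩ := hmk.2 (m ≫ a₂) h1
      have h2 : w ≫ b₁ = 0 := by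
        apply hbk.cancel
        calc (w ≫ b₁) ≫ r₁ = w ≫ (b₁ ≫ r₁) := by simp only [Category.assoc]
          _ = w ≫ (q₁ ≫ b₂) := by rw [hsq3]
          _ = (w ≫ q₁) ≫ b₂ := by simp only [Category.assoc]
          _ = (m ≫ a₂) ≫ b₂ := by rw [hw]
          _ = m ≫ (a₂ ≫ b₂) := by simp only [Category.assoc]
          _ = 0 := by rw [hk2.1, comp_zero]
          _ = 0 ≫ r₁ := by rw [zero_comp]
      obtain ⟨u, hu, -⟩ := hk1.2 w h2
      have hmono_p₁ : ∀ {W : 𝒞} (x y2 : W ⟶ A₁), x ≫ p₁ = y2 ≫ p₁ → x = y2 := by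
        intro W x y2 hxy
        apply hk1.cancel
        apply hmk.cancel
        calc (x ≫ a₁) ≫ q₁ = x ≫ (a₁ ≫ q₁) := by simp only [Category.assoc]
          _ = x ≫ (p₁ ≫ a₂) := by rw [hsq1]
          _ = (x ≫ p₁) ≫ a₂ := by simp only [Category.assoc]
          _ = (y2 ≫ p₁) ≫ a₂ := by rw [hxy]
          _ = y2 ≫ (p₁ ≫ a₂) := by simp only [Category.assoc]
          _ = y2 ≫ (a₁ ≫ q₁) := by rw [hsq1]
          _ = (y2 ≫ a₁) ≫ q₁ := by simp only [Category.assoc]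
      have hup : u ≫ p₁ = m := by
        apply hk2.cancel
        calc (u ≫ p₁) ≫ a₂ = u ≫ (p₁ ≫ a₂) := by simp only [Category.assoc]
          _ = u ≫ (a₁ ≫ q₁) := by rw [hsq1]
          _ = (u ≫ a₁) ≫ q₁ := by simp only [Category.assoc]
          _ = w ≫ q₁ := by rw [hu]
          _ = m ≫ a₂ := hw
      exact ⟨u, hup, fun y hy => hmono_p₁ y u (by rw [hy, hup])⟩
    -- now show that p₂ is a regular epimorphism
    have hq₂reg : IsRegEpi q₂ := hmc.isRegEpi
    have hb₁reg : IsRegEpi b₁ := hco1.isRegEpi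
    have hPcond : pullback.fst a₃ q₂ ≫ a₃ = pullback.snd a₃ q₂ ≫ q₂ := pullback.condition
    have hπreg : IsRegEpi (pullback.fst a₃ q₂) :=
      hstab _ _ _ _ (IsPullback.of_hasPullback a₃ q₂) hq₂reg
    have hγ0 : (pullback.snd a₃ q₂ ≫ b₂) ≫ r₂ = 0 := by
      calc (pullback.snd a₃ q₂ ≫ b₂) ≫ r₂
          = pullback.snd a₃ q₂ ≫ (b₂ ≫ r₂) := by simp only [Category.assoc]
        _ = pullback.snd a₃ q₂ ≫ (q₂ ≫ b₃) := by rw [hsq4]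
        _ = (pullback.snd a₃ q₂ ≫ q₂) ≫ b₃ := by simp only [Category.assoc]
        _ = (pullback.fst a₃ q₂ ≫ a₃) ≫ b₃ := by rw [hPcond]
        _ = pullback.fst a₃ q₂ ≫ (a₃ ≫ b₃) := by simp only [Category.assoc]
        _ = 0 := by rw [hk3.1, comp_zero]
    obtain ⟨γ, hγ, -⟩ := hbk.2 (pullback.snd a₃ q₂ ≫ b₂) hγ0
    have he₁reg : IsRegEpi (pullback.fst γ b₁) :=
      hstab _ _ _ _ (IsPullback.of_hasPullback γ b₁) hb₁reg
    have hE₁cond : pullback.fst γ b₁ ≫ γ = pullback.snd γ b₁ ≫ b₁ := pullback.condition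
    obtain ⟨I, g, mI, hgreg, hgm, hmono⟩ := exists_image hcoeq hstab
      (prod.lift (pullback.snd a₃ q₂ ≫ b₂) (pullback.fst a₃ q₂))
    have hfst : g ≫ mI ≫ prod.fst = pullback.snd a₃ q₂ ≫ b₂ := by
      rw [← Category.assoc, hgm, prod.lift_fst]
    have hsnd : g ≫ mI ≫ prod.snd = pullback.fst a₃ q₂ := by
      rw [← Category.assoc, hgm, prod.lift_snd]
    have jmρ : ∀ {W : 𝒞} (x y2 : W ⟶ I), x ≫ (mI ≫ prod.fst) = y2 ≫ (mI ≫ prod.fst) →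
        x ≫ (mI ≫ prod.snd) = y2 ≫ (mI ≫ prod.snd) → x = y2 := by
      intro W x y2 hx hy
      apply hmono
      apply Limits.prod.hom_ext
      · simp only [Category.assoc]
        exact hx
      · simp only [Category.assoc]
        exact hy
    have hlift0 : (0 : pullback γ b₁ ⟶ A₃) ≫ a₃ = (pullback.snd γ b₁ ≫ q₁) ≫ q₂ := by
      rw [zero_comp, Category.assoc, hmk.1, comp_zero]
    have hcommon : (pullback.fst γ b₁ ≫ g) ≫ (mI ≫ prod.fst)
        = (pullback.lift 0 (pullback.snd γ b₁ ≫ q₁) hlift0 ≫ g) ≫ (mI ≫ prod.fst) := by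
      calc (pullback.fst γ b₁ ≫ g) ≫ (mI ≫ prod.fst)
          = pullback.fst γ b₁ ≫ (g ≫ mI ≫ prod.fst) := by simp only [Category.assoc]
        _ = pullback.fst γ b₁ ≫ (pullback.snd a₃ q₂ ≫ b₂) := by rw [hfst]
        _ = pullback.fst γ b₁ ≫ (γ ≫ r₁) := by rw [← hγ]
        _ = (pullback.fst γ b₁ ≫ γ) ≫ r₁ := by simp only [Category.assoc]
        _ = (pullback.snd γ b₁ ≫ b₁) ≫ r₁ := by rw [hE₁cond]
        _ = pullback.snd γ b₁ ≫ (b₁ ≫ r₁) := by simp only [Category.assoc]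
        _ = pullback.snd γ b₁ ≫ (q₁ ≫ b₂) := by rw [hsq3]
        _ = (pullback.snd γ b₁ ≫ q₁) ≫ b₂ := by simp only [Category.assoc]
        _ = (pullback.lift 0 (pullback.snd γ b₁ ≫ q₁) hlift0 ≫ pullback.snd a₃ q₂) ≫ b₂ := by
            rw [pullback.lift_snd]
        _ = pullback.lift 0 (pullback.snd γ b₁ ≫ q₁) hlift0 ≫ (pullback.snd a₃ q₂ ≫ b₂) := by
            simp only [Category.assoc]
        _ = pullback.lift 0 (pullback.snd γ b₁ ≫ q₁) hlift0 ≫ (g ≫ mI ≫ prod.fst) := by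
            rw [hfst]
        _ = (pullback.lift 0 (pullback.snd γ b₁ ≫ q₁) hlift0 ≫ g) ≫ (mI ≫ prod.fst) := by
            simp only [Category.assoc]
    have ht₂0 : (pullback.lift 0 (pullback.snd γ b₁ ≫ q₁) hlift0 ≫ g) ≫ (mI ≫ prod.snd) = 0 := by
      calc (pullback.lift 0 (pullback.snd γ b₁ ≫ q₁) hlift0 ≫ g) ≫ (mI ≫ prod.snd)
          = pullback.lift 0 (pullback.snd γ b₁ ≫ q₁) hlift0 ≫ (g ≫ mI ≫ prod.snd) := by
            simp only [Category.assoc]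
        _ = pullback.lift 0 (pullback.snd γ b₁ ≫ q₁) hlift0 ≫ pullback.fst a₃ q₂ := by
            rw [hsnd]
        _ = 0 := pullback.lift_fst _ _ _
    obtain ⟨t₃, ht₃1, ht₃2⟩ := sub_rule hsub ⟨I, mI ≫ prod.fst, mI ≫ prod.snd, jmρ⟩
      (pullback.fst γ b₁ ≫ g) (pullback.lift 0 (pullback.snd γ b₁ ≫ q₁) hlift0 ≫ g)
      hcommon ht₂0
    have ht₃1' : t₃ ≫ (mI ≫ prod.fst) = 0 := ht₃1
    have ht₃2' : t₃ ≫ (mI ≫ prod.snd)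
        = (pullback.fst γ b₁ ≫ g) ≫ (mI ≫ prod.snd) := ht₃2
    have he₂reg : IsRegEpi (pullback.fst t₃ g) :=
      hstab _ _ _ _ (IsPullback.of_hasPullback t₃ g) hgreg
    have hE₂cond : pullback.fst t₃ g ≫ t₃ = pullback.snd t₃ g ≫ g := pullback.condition
    have hθb₂ : (pullback.snd t₃ g ≫ pullback.snd a₃ q₂) ≫ b₂ = 0 := by
      calc (pullback.snd t₃ g ≫ pullback.snd a₃ q₂) ≫ b₂
          = pullback.snd t₃ g ≫ (pullback.snd a₃ q₂ ≫ b₂) := by simp only [Category.assoc]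
        _ = pullback.snd t₃ g ≫ (g ≫ mI ≫ prod.fst) := by rw [hfst]
        _ = (pullback.snd t₃ g ≫ g) ≫ (mI ≫ prod.fst) := by simp only [Category.assoc]
        _ = (pullback.fst t₃ g ≫ t₃) ≫ (mI ≫ prod.fst) := by rw [hE₂cond]
        _ = pullback.fst t₃ g ≫ (t₃ ≫ (mI ≫ prod.fst)) := by simp only [Category.assoc]
        _ = 0 := by rw [ht₃1', comp_zero]
    obtain ⟨ψ, hψ, -⟩ := hk2.2 (pullback.snd t₃ g ≫ pullback.snd a₃ q₂) hθb₂
    have hθπ : pullback.snd t₃ g ≫ pullback.fst a₃ q₂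
        = pullback.fst t₃ g ≫ (pullback.fst γ b₁ ≫ pullback.fst a₃ q₂) := by
      calc pullback.snd t₃ g ≫ pullback.fst a₃ q₂
          = pullback.snd t₃ g ≫ (g ≫ mI ≫ prod.snd) := by rw [hsnd]
        _ = (pullback.snd t₃ g ≫ g) ≫ (mI ≫ prod.snd) := by simp only [Category.assoc]
        _ = (pullback.fst t₃ g ≫ t₃) ≫ (mI ≫ prod.snd) := by rw [hE₂cond]
        _ = pullback.fst t₃ g ≫ (t₃ ≫ (mI ≫ prod.snd)) := by simp only [Category.assoc]
        _ = pullback.fst t₃ g ≫ ((pullback.fst γ b₁ ≫ g) ≫ (mI ≫ prod.snd)) := by rw [ht₃2']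
        _ = pullback.fst t₃ g ≫ (pullback.fst γ b₁ ≫ (g ≫ mI ≫ prod.snd)) := by
            simp only [Category.assoc]
        _ = pullback.fst t₃ g ≫ (pullback.fst γ b₁ ≫ pullback.fst a₃ q₂) := by rw [hsnd]
    have hψp₂ : ψ ≫ p₂ = pullback.fst t₃ g ≫ (pullback.fst γ b₁ ≫ pullback.fst a₃ q₂) := by
      apply hk3.cancel
      calc (ψ ≫ p₂) ≫ a₃ = ψ ≫ (p₂ ≫ a₃) := by simp only [Category.assoc]
        _ = ψ ≫ (a₂ ≫ q₂) := by rw [hsq2]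
        _ = (ψ ≫ a₂) ≫ q₂ := by simp only [Category.assoc]
        _ = (pullback.snd t₃ g ≫ pullback.snd a₃ q₂) ≫ q₂ := by rw [hψ]
        _ = pullback.snd t₃ g ≫ (pullback.snd a₃ q₂ ≫ q₂) := by simp only [Category.assoc]
        _ = pullback.snd t₃ g ≫ (pullback.fst a₃ q₂ ≫ a₃) := by rw [hPcond]
        _ = (pullback.snd t₃ g ≫ pullback.fst a₃ q₂) ≫ a₃ := by simp only [Category.assoc]
        _ = (pullback.fst t₃ g ≫ (pullback.fst γ b₁ ≫ pullback.fst a₃ q₂)) ≫ a₃ := by rw [hθπ]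
    have hp₂reg : IsRegEpi p₂ := by
      apply isRegEpi_of_comp hcoeq hstab (w := ψ)
      rw [hψp₂]
      exact isRegEpi_comp hstab he₂reg (isRegEpi_comp hstab he₁reg hπreg)
    have hcok : IsCokernelOf p₂ p₁ := by
      obtain ⟨K, k, hkco⟩ := hnormal p₂ hp₂reg
      obtain ⟨v, hv, -⟩ := hker k hkco.1
      refine ⟨hp12, fun {T} h hh => ?_⟩
      obtain ⟨u, hu, -⟩ := hkco.2 h (by rw [← hv, Category.assoc, hh, comp_zero])
      exact ⟨u, hu, fun y hy => hp₂reg.cancel (hy.trans hu.symm)⟩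
    exact ⟨⟨hp12, hker⟩, hcok⟩
  · -- the Upper 3×3 Lemma implies subtractivity
    intro h33 X ρ hrefl hleft
    obtain ⟨r, hr1, hr2⟩ := hrefl
    obtain ⟨l, hl1, hl2⟩ := hleft
    obtain ⟨Z₀, hZ₀⟩ := HasZeroObject.zero (C := 𝒞)
    have hb₁sec : kernel.lift ρ.p2 l hl2 ≫ (kernel.ι ρ.p2 ≫ ρ.p1) = 𝟙 X := by
      rw [← Category.assoc, kernel.lift_ι, hl1]
    have hp₁cond : (kernel.ι (kernel.ι ρ.p2 ≫ ρ.p1) ≫ kernel.ι ρ.p2) ≫ ρ.p1 = 0 := by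
      rw [Category.assoc]
      exact kernel.condition _
    have hSE := h33 (kernel.ι (kernel.ι ρ.p2 ≫ ρ.p1)) (kernel.ι ρ.p1) (𝟙 X)
      (kernel.ι ρ.p2 ≫ ρ.p1) ρ.p1 (0 : X ⟶ Z₀)
      (kernel.lift ρ.p1 (kernel.ι (kernel.ι ρ.p2 ≫ ρ.p1) ≫ kernel.ι ρ.p2) hp₁cond)
      (kernel.ι ρ.p1 ≫ ρ.p2)
      (kernel.ι ρ.p2) ρ.p2 (𝟙 X) (0 : X ⟶ Z₀)
      (kernel.lift_ι _ _ _)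
      (Category.comp_id _)
      (Category.comp_id _).symm
      (by rw [comp_zero, comp_zero])
      (shortExact_of_section hnormal (kernel.lift ρ.p2 l hl2) hb₁sec)
      (shortExact_of_section hnormal l hl1)
      (shortExact_id_zero hZ₀)
      (shortExact_of_section hnormal r hr2)
      (shortExact_id_zero hZ₀)
    obtain ⟨-, hcok⟩ := hSE
    have hak0 : kernel.ι (kernel.ι ρ.p2 ≫ ρ.p1) ≫ kernel.ι ρ.p2 = 0 :=
      ρ.jm _ 0
        (by rw [Category.assoc, kernel.condition, zero_comp])
        (by rw [Category.assoc, kernel.condition, comp_zero, zero_comp])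
    have hpt₁0 : kernel.lift ρ.p1
        (kernel.ι (kernel.ι ρ.p2 ≫ ρ.p1) ≫ kernel.ι ρ.p2) hp₁cond = 0 := by
      apply (cancel_mono (kernel.ι ρ.p1)).1
      rw [kernel.lift_ι, hak0, zero_comp]
    obtain ⟨u, hu, -⟩ := hcok.2 (𝟙 (kernel ρ.p1)) (by rw [hpt₁0, zero_comp])
    have hupt : u ≫ (kernel.ι ρ.p1 ≫ ρ.p2) = 𝟙 X := by
      apply hcok.isRegEpi.cancel
      calc (kernel.ι ρ.p1 ≫ ρ.p2) ≫ u ≫ (kernel.ι ρ.p1 ≫ ρ.p2)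
          = ((kernel.ι ρ.p1 ≫ ρ.p2) ≫ u) ≫ (kernel.ι ρ.p1 ≫ ρ.p2) := by
            simp only [Category.assoc]
        _ = 𝟙 _ ≫ (kernel.ι ρ.p1 ≫ ρ.p2) := by rw [hu]
        _ = (kernel.ι ρ.p1 ≫ ρ.p2) ≫ 𝟙 X := by rw [Category.id_comp, Category.comp_id]
    refine ⟨u ≫ kernel.ι ρ.p1, ?_, ?_⟩
    · rw [Category.assoc, kernel.condition, comp_zero]
    · calc (u ≫ kernel.ι ρ.p1) ≫ ρ.p2 = u ≫ (kernel.ι ρ.p1 ≫ ρ.p2) := by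
            simp only [Category.assoc]
        _ = 𝟙 X := hupt


end Paper
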